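/- Let S be a commutative unital ring, UT_2(S) the ring of upper triangular 2×2 matrices over S, and n ≥ 2. Let f = [x_1,x_n,x_2,x_3,…,x_{n−1}] ∈ P_n(ℤ) be the left-normed long commutator, let τ = (1 n) ∈ S_n be the transposition exchanging 1 and n, and let S_n act on P_n(ℤ) by permuting variable indices (σ·x_i = x_{σ(i)}). Then Σ_{π ∈ S_n, π(n)=n} (π·f − (τπ)·f) − n·(n−2)!·f ∈ P_n(ℤ) ∩ Id(UT_2(S),ℤ); that is, b_{T_λ}a_{T_λ}·f ≡ n(n−2)!·f modulo the multilinear identities of UT_2(S), where a_{T_λ} and b_{T_λ} are the Young symmetrizers of the tableau of shape λ = (n−1,1) with first row 1,2,…,n−1 and second row n. -/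

import Mathlib

/-- The free unital associative ring `ℤ⟨x_1, x_2, …⟩` on countably many
(0-indexed) variables. -/
abbrev FA : Type := FreeAlgebra ℤ ℕ

/-- The variable `x_{i+1}` (0-indexed: `X i`). -/
noncomputable def X (i : ℕ) : FA := FreeAlgebra.ι ℤ i

/-- `P_n(ℤ)`: the additive subgroup of `ℤ⟨X⟩` generated by the multilinear monomials
`x_{σ(1)} x_{σ(2)} ⋯ x_{σ(n)}`, `σ ∈ S_n` (variables 0-indexed). -/
noncomputable def Pn (n : ℕ) : AddSubgroup FA :=
  AddSubgroup.closure
    {w | ∃ σ : Equiv.Perm (Fin n), w = (List.ofFn fun i => X (σ i)).prod}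

/-- `Id(R, ℤ)` (inside the free algebra): the elements vanishing under every
substitution of elements of `R` for the variables. -/
noncomputable def IdA (R : Type*) [Ring R] : AddSubgroup FA where
  carrier := {f | ∀ v : ℕ → R, FreeAlgebra.lift ℤ v f = 0}
  zero_mem' := fun v => map_zero _
  add_mem' := fun hf hg v => by rw [map_add, hf v, hg v, add_zero]
  neg_mem' := fun hf v => by rw [map_neg, hf v, neg_zero]

/-- Left-normed iterated commutator: `commList a [b₁, …, b_k] = [a, b₁, …, b_k]`
(`commList a [] = a`), where `[a,b] = ab - ba`. -/
def commList {A : Type*} [NonUnitalRing A] : A → List A → A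
  | a, [] => a
  | a, b :: l => commList (a * b - b * a) l

/-- The left-normed long commutator `[x_{i₁}, …, x_{i_k}]` of a list of variable
indices (junk value `0` for the empty list). -/
noncomputable def lcWord : List ℕ → FA
  | [] => 0
  | a :: l => commList (X a) l

/-- `Γ_n(ℤ)`: the additive subgroup of `P_n(ℤ)` generated by the proper multilinear
polynomials: products `c₁ c₂ ⋯ c_r` of long commutators (each of length ≥ 2) in which
each of the `n` variables occurs exactly once. -/
noncomputable def Gamma (n : ℕ) : AddSubgroup FA :=
  AddSubgroup.closure
    {w | ∃ L : List (List (Fin n)),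
      (∀ l ∈ L, 2 ≤ l.length) ∧ L.flatten.Perm (List.finRange n) ∧
      w = (L.map fun l => lcWord (l.map Fin.val)).prod}

/-- The two-sided ideal of the (unital) ring `FA` generated by a set `S`:
the additive subgroup generated by all products `a * s * b`, `s ∈ S`. -/
noncomputable def tsIdeal (S : Set FA) : AddSubgroup FA :=
  AddSubgroup.closure {w | ∃ a s b : FA, s ∈ S ∧ w = a * s * b}

/-- Renaming of variables: the endomorphism of `FA` sending `x_i ↦ x_{π(i)}` for the
first `n` variables (and fixing the remaining ones), for `π ∈ S_n`. -/
noncomputable def rename {n : ℕ} (π : Equiv.Perm (Fin n)) : FA →ₐ[ℤ] FA :=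
  FreeAlgebra.lift ℤ (fun i => if h : i < n then X (π ⟨i, h⟩) else X i)

/-- The ring of upper triangular `2 × 2` matrices over `S`, as a subring of `M_2(S)`. -/
def UT2 (S : Type*) [CommRing S] : Subring (Matrix (Fin 2) (Fin 2) S) where
  carrier := {M | M 1 0 = 0}
  zero_mem' := rfl
  one_mem' := Matrix.one_apply_ne (by decide)
  add_mem' := by
    intro a b ha hb
    show (a + b) 1 0 = 0
    simp only [Matrix.add_apply]
    rw [ha, hb, add_zero]
  neg_mem' := by
    intro a ha
    show (-a) 1 0 = 0
    simp only [Matrix.neg_apply]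
    rw [ha, neg_zero]
  mul_mem' := by
    intro a b ha hb
    show (a * b) 1 0 = 0
    rw [Matrix.mul_apply, Fin.sum_univ_two, ha, hb, zero_mul, mul_zero, add_zero]


namespace Stmt14Aux
open List

/-- `f` polynomial of the statement. -/
noncomputable def fpoly (n : ℕ) : FA :=
  commList (X 0) (X (n + 1) :: (List.range n).map fun i => X (i + 1))

/-- The index list of `fpoly n` (head = first commutator argument). -/
def fIdx (n : ℕ) : List ℕ := 0 :: (n + 1) :: (List.range n).map (· + 1)

lemma fpoly_eq (n : ℕ) :
    fpoly n = commList (X 0) (((n + 1) :: (List.range n).map (· + 1)).map X) := by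
  simp [fpoly, List.map_map, Function.comp_def]

lemma fIdx_perm (n : ℕ) : (fIdx n).Perm (List.range (n + 2)) := by
  have h1 : List.range (n + 2) = 0 :: ((List.range n).map (· + 1) ++ [n + 1]) := by
    rw [List.range_succ, List.range_succ_eq_map]
    simp [Nat.succ_eq_add_one]
  rw [h1, fIdx]
  exact List.Perm.cons 0 (List.perm_append_singleton _ _).symm

lemma map_commList {A B : Type*} [Ring A] [Ring B] {F : Type*} [FunLike F A B]
    [RingHomClass F A B] (φ : F) (a : A) (l : List A) :
    φ (commList a l) = commList (φ a) (l.map φ) := by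
  induction l generalizing a with
  | nil => rfl
  | cons b t ih =>
    show φ (commList (a * b - b * a) t) = commList (φ a * φ b - φ b * φ a) (t.map φ)
    rw [ih, map_sub, map_mul, map_mul]

noncomputable def PS (u : List ℕ) : AddSubgroup FA :=
  AddSubgroup.closure {w | ∃ l : List ℕ, l.Perm u ∧ w = (l.map X).prod}

lemma mul_X_mem_right {u : List ℕ} {m : FA} (hm : m ∈ PS u) (b : ℕ) :
    m * X b ∈ PS (u ++ [b]) := by
  refine AddSubgroup.closure_induction (p := fun x _ => x * X b ∈ PS (u ++ [b]))
    ?_ ?_ ?_ ?_ hm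
  · rintro w ⟨l, hl, rfl⟩
    refine AddSubgroup.subset_closure ⟨l ++ [b], hl.append_right _, ?_⟩
    simp
  · simpa using (PS (u ++ [b])).zero_mem
  · intro x y _ _ hx hy
    rw [add_mul]; exact add_mem hx hy
  · intro x _ hx
    rw [neg_mul]; exact neg_mem hx

lemma mul_X_mem_left {u : List ℕ} {m : FA} (hm : m ∈ PS u) (b : ℕ) :
    X b * m ∈ PS (u ++ [b]) := by
  refine AddSubgroup.closure_induction (p := fun x _ => X b * x ∈ PS (u ++ [b]))
    ?_ ?_ ?_ ?_ hm
  · rintro w ⟨l, hl, rfl⟩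
    refine AddSubgroup.subset_closure ⟨b :: l, ?_, by simp⟩
    exact ((hl.cons b).trans (List.perm_append_singleton b u).symm)
  · simpa using (PS (u ++ [b])).zero_mem
  · intro x y _ _ hx hy
    rw [mul_add]; exact add_mem hx hy
  · intro x _ hx
    rw [mul_neg]; exact neg_mem hx

lemma commList_mem_PS : ∀ (t u : List ℕ) (m : FA), m ∈ PS u →
    commList m (t.map X) ∈ PS (u ++ t)
  | [], u, m, hm => by simpa [commList] using hm
  | b :: t, u, m, hm => by
    rw [List.append_cons]
    exact commList_mem_PS t (u ++ [b]) _
      (sub_mem (mul_X_mem_right hm b) (mul_X_mem_left hm b))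

lemma X_mem_PS (a : ℕ) : X a ∈ PS [a] :=
  AddSubgroup.subset_closure ⟨[a], List.Perm.refl _, by simp⟩

lemma mono_mem_Pn : ∀ (N : ℕ) (l : List ℕ), l.Perm (List.range N) →
    (l.map X).prod ∈ Pn N := by
  intro N l h
  have hlen : l.length = N := by simpa using h.length_eq
  subst hlen
  have hnd : l.Nodup := h.nodup_iff.mpr List.nodup_range
  have hmem : ∀ i : Fin l.length, l.get i < l.length := by
    intro i
    have := h.mem_iff.mp (l.get_mem i)
    simpa [List.mem_range] using this
  have hinj : Function.Injective (fun i : Fin l.length => (⟨l.get i, hmem i⟩ : Fin l.length)) := by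
    intro i j hij
    exact List.nodup_iff_injective_get.mp hnd (by simpa [Fin.ext_iff] using hij)
  let σ : Equiv.Perm (Fin l.length) :=
    Equiv.ofBijective _ (Finite.injective_iff_bijective.mp hinj)
  refine AddSubgroup.subset_closure ⟨σ, ?_⟩
  have : (List.ofFn fun i => X (σ i)) = l.map X := by
    show (List.ofFn fun i => X (l.get i)) = l.map X
    rw [show (fun i => X (l.get i)) = X ∘ l.get from rfl, ← List.map_ofFn, List.ofFn_get]
  rw [this]

lemma PS_le_Pn {N : ℕ} {u : List ℕ} (h : u.Perm (List.range N)) : PS u ≤ Pn N := by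
  rw [PS, AddSubgroup.closure_le]
  rintro w ⟨l, hl, rfl⟩
  exact mono_mem_Pn N l (hl.trans h)

/-- extension of a permutation of `Fin N` to `ℕ`. -/
def phat {N : ℕ} (π : Equiv.Perm (Fin N)) (i : ℕ) : ℕ :=
  if h : i < N then (π ⟨i, h⟩ : ℕ) else i

lemma phat_lt {N : ℕ} (π : Equiv.Perm (Fin N)) {i : ℕ} (h : i < N) :
    phat π i = (π ⟨i, h⟩ : ℕ) := dif_pos h

lemma rename_X {N : ℕ} (π : Equiv.Perm (Fin N)) (i : ℕ) :
    rename π (X i) = X (phat π i) := by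
  simp only [rename, X, FreeAlgebra.lift_ι_apply, phat]
  split <;> rfl

lemma map_phat_perm_range {N : ℕ} (π : Equiv.Perm (Fin N)) {l : List ℕ}
    (h : l.Perm (List.range N)) : (l.map (phat π)).Perm (List.range N) := by
  refine ((h.map (phat π)).trans ?_)
  have hnd : ((List.range N).map (phat π)).Nodup := by
    refine List.Nodup.map_on ?_ List.nodup_range
    intro x hx y hy hxy
    rw [List.mem_range] at hx hy
    rw [phat_lt π hx, phat_lt π hy] at hxy
    have := π.injective (Fin.val_injective hxy)
    simpa [Fin.ext_iff] using this
  rw [List.perm_ext_iff_of_nodup hnd List.nodup_range]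
  intro a
  simp only [List.mem_map, List.mem_range]
  constructor
  · rintro ⟨i, hi, rfl⟩
    rw [phat_lt π hi]
    exact (π ⟨i, hi⟩).isLt
  · intro ha
    exact ⟨(π.symm ⟨a, ha⟩ : ℕ), (π.symm ⟨a, ha⟩).isLt, by
      rw [phat_lt π (π.symm ⟨a, ha⟩).isLt]; simp⟩

lemma rename_fpoly_mem_Pn (n : ℕ) (π : Equiv.Perm (Fin (n + 2))) :
    rename π (fpoly n) ∈ Pn (n + 2) := by
  rw [fpoly_eq, map_commList (rename π), rename_X]
  have hmap : (((n + 1) :: (List.range n).map (· + 1)).map X).map (rename π)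
      = ((((n + 1) :: (List.range n).map (· + 1)).map (phat π)).map X) := by
    rw [List.map_map, List.map_map]
    exact List.map_congr_left fun a _ => rename_X π a
  rw [hmap]
  have hperm : (phat π 0 :: ((n + 1) :: (List.range n).map (· + 1)).map (phat π)).Perm
      (List.range (n + 2)) := by
    have := map_phat_perm_range π (fIdx_perm n)
    simpa [fIdx] using this
  refine PS_le_Pn hperm ?_
  have := commList_mem_PS (((n + 1) :: (List.range n).map (· + 1)).map (phat π))
    [phat π 0] _ (X_mem_PS (phat π 0))
  simpa using this

lemma fpoly_mem_Pn (n : ℕ) : fpoly n ∈ Pn (n + 2) := by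
  rw [fpoly_eq]
  refine PS_le_Pn (fIdx_perm n) ?_
  have := commList_mem_PS ((n + 1) :: (List.range n).map (· + 1)) [0] _ (X_mem_PS 0)
  simpa [fIdx] using this

end Stmt14Aux

namespace Stmt14Aux

variable {S : Type} [CommRing S]

def mat (A : UT2 S) : Matrix (Fin 2) (Fin 2) S := (A : Matrix (Fin 2) (Fin 2) S)

def ee (A : UT2 S) : S := mat A 0 0 - mat A 1 1
def ww (A : UT2 S) : S := mat A 0 1
def eps (A : UT2 S) : S := mat A 1 1 - mat A 0 0
def IsStrict (A : UT2 S) : Prop := mat A 0 0 = 0 ∧ mat A 1 1 = 0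

lemma eps_eq (A : UT2 S) : eps A = -ee A := by simp [eps, ee]

lemma mat10 (A : UT2 S) : mat A 1 0 = 0 := A.2

lemma mat_mul (A B : UT2 S) (i j : Fin 2) :
    mat (A * B) i j = mat A i 0 * mat B 0 j + mat A i 1 * mat B 1 j := by
  show ((A : Matrix (Fin 2) (Fin 2) S) * B) i j = _
  rw [Matrix.mul_apply, Fin.sum_univ_two]; rfl

lemma mat_sub (A B : UT2 S) (i j : Fin 2) :
    mat (A - B) i j = mat A i j - mat B i j := rfl

/-- Commutator with a strict element. -/
lemma comm_strict {C : UT2 S} (h : IsStrict C) (B : UT2 S) :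
    IsStrict (C * B - B * C) ∧ ww (C * B - B * C) = ww C * eps B := by
  obtain ⟨h00, h11⟩ := h
  refine ⟨⟨?_, ?_⟩, ?_⟩ <;>
    simp [IsStrict, ww, eps, mat_sub, mat_mul, h00, h11, mat10] <;> ring

lemma commList_strict {C : UT2 S} (h : IsStrict C) (L : List (UT2 S)) :
    IsStrict (commList C L) ∧ ww (commList C L) = ww C * (L.map eps).prod := by
  induction L generalizing C with
  | nil => exact ⟨h, by simp [commList]⟩
  | cons B L ih =>
    obtain ⟨hs, hw⟩ := comm_strict h B
    obtain ⟨hs', hw'⟩ := ih hs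
    refine ⟨hs', ?_⟩
    show ww (commList (C * B - B * C) L) = _
    rw [hw', hw]
    simp [mul_assoc]

lemma comm_first (A B : UT2 S) :
    IsStrict (A * B - B * A) ∧ ww (A * B - B * A) = ee A * ww B - ee B * ww A := by
  refine ⟨⟨?_, ?_⟩, ?_⟩ <;>
    simp [IsStrict, ww, ee, mat_sub, mat_mul, mat10] <;> ring

lemma commList_eval (A B : UT2 S) (L : List (UT2 S)) :
    IsStrict (commList A (B :: L)) ∧
      ww (commList A (B :: L)) = (ee A * ww B - ee B * ww A) * (L.map eps).prod := by
  obtain ⟨hs, hw⟩ := comm_first A B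
  obtain ⟨hs', hw'⟩ := commList_strict hs L
  exact ⟨hs', by rw [show commList A (B :: L) = commList (A * B - B * A) L from rfl, hw', hw]⟩

end Stmt14Aux

namespace Stmt14Aux
open Finset

variable {S : Type} [CommRing S]

lemma list_prod_range {M : Type*} [CommMonoid M] (n : ℕ) (g : ℕ → M) :
    ((List.range n).map g).prod = ∏ i ∈ Finset.range n, g i := by
  rw [← Multiset.prod_coe, Finset.prod_eq_multiset_prod]
  rfl

lemma lift_rename_X (v : ℕ → UT2 S) {N : ℕ} (π : Equiv.Perm (Fin N)) (i : ℕ) :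
    FreeAlgebra.lift ℤ v (rename π (X i)) = v (phat π i) := by
  rw [rename_X, X, FreeAlgebra.lift_ι_apply]

lemma lift_rename_fpoly (n : ℕ) (v : ℕ → UT2 S) (π : Equiv.Perm (Fin (n + 2))) :
    FreeAlgebra.lift ℤ v (rename π (fpoly n)) =
      commList (v (phat π 0))
        (v (phat π (n + 1)) :: (List.range n).map fun i => v (phat π (i + 1))) := by
  rw [fpoly_eq, map_commList (rename π), map_commList (FreeAlgebra.lift ℤ v)]
  simp only [List.map_cons, List.map_map, Function.comp_def, lift_rename_X]

lemma prod_reindex (n : ℕ) (v : ℕ → UT2 S) (π : Equiv.Perm (Fin (n + 2))) :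
    (((List.range n).map fun i => v (phat π (i + 1))).map eps).prod =
      ∏ k ∈ (univ \ {π 0, π (Fin.last (n + 1))} : Finset (Fin (n + 2))),
        eps (v (k : ℕ)) := by
  rw [List.map_map, list_prod_range]
  refine Finset.prod_bij (fun i hi => π ⟨i + 1, by
      have := Finset.mem_range.mp hi; omega⟩) ?_ ?_ ?_ ?_
  · intro i hi
    have hi' := Finset.mem_range.mp hi
    simp only [Finset.mem_sdiff, Finset.mem_univ, Finset.mem_insert, Finset.mem_singleton,
      true_and]
    push_neg
    constructor
    · intro h
      have := π.injective h
      simp only [Fin.ext_iff, Fin.val_zero] at this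
      omega
    · intro h
      have := π.injective h
      simp only [Fin.ext_iff, Fin.val_last] at this
      omega
  · intro i hi j hj hij
    have := π.injective hij
    simp only [Fin.ext_iff] at this
    omega
  · intro k hk
    simp only [Finset.mem_sdiff, Finset.mem_univ, Finset.mem_insert, Finset.mem_singleton,
      true_and] at hk
    push_neg at hk
    obtain ⟨m, rfl⟩ := π.surjective k
    obtain ⟨hk0, hkl⟩ := hk
    have hm0 : m ≠ 0 := fun h => hk0 (congrArg π h)
    have hml : m ≠ Fin.last (n + 1) := fun h => hkl (congrArg π h)
    have h1 : 1 ≤ (m : ℕ) := by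
      rcases Nat.eq_zero_or_pos (m : ℕ) with h | h
      · exact absurd (Fin.ext (by simpa using h)) hm0
      · omega
    have h2 : (m : ℕ) < n + 1 := by
      have hlt := m.isLt
      rcases Nat.lt_or_ge (m : ℕ) (n + 1) with h | h
      · exact h
      · exact absurd (Fin.ext (by rw [Fin.val_last]; omega)) hml
    refine ⟨(m : ℕ) - 1, Finset.mem_range.mpr (by omega), ?_⟩
    exact congrArg π (Fin.ext (by simp; omega))
  · intro i hi
    have hi' := Finset.mem_range.mp hi
    rw [Function.comp_apply, phat_lt π (by omega : i + 1 < n + 2)]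

lemma eval_term (n : ℕ) (v : ℕ → UT2 S) (π : Equiv.Perm (Fin (n + 2))) :
    IsStrict (FreeAlgebra.lift ℤ v (rename π (fpoly n))) ∧
      ww (FreeAlgebra.lift ℤ v (rename π (fpoly n))) =
        (ee (v ((π 0 : Fin (n + 2)) : ℕ)) * ww (v ((π (Fin.last (n + 1)) : Fin (n + 2)) : ℕ)) -
          ee (v ((π (Fin.last (n + 1)) : Fin (n + 2)) : ℕ)) * ww (v ((π 0 : Fin (n + 2)) : ℕ))) *
        ∏ k ∈ (univ \ {π 0, π (Fin.last (n + 1))} : Finset (Fin (n + 2))), eps (v (k : ℕ)) := by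
  rw [lift_rename_fpoly]
  obtain ⟨hs, hw⟩ := commList_eval (v (phat π 0)) (v (phat π (n + 1)))
      ((List.range n).map fun i => v (phat π (i + 1)))
  refine ⟨hs, ?_⟩
  rw [hw, prod_reindex]
  have h0 : phat π 0 = ((π 0 : Fin (n + 2)) : ℕ) := by
    rw [phat_lt π (by omega : (0:ℕ) < n + 2)]; rfl
  have hl : phat π (n + 1) = ((π (Fin.last (n + 1)) : Fin (n + 2)) : ℕ) := by
    rw [phat_lt π (by omega : n + 1 < n + 2)]; rfl
  rw [h0, hl]

end Stmt14Aux

namespace Stmt14Aux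
open Finset Equiv

variable {S : Type} [CommRing S]

lemma zero_ne_last (n : ℕ) : (0 : Fin (n + 2)) ≠ Fin.last (n + 1) := by
  simp [Fin.ext_iff, Fin.val_last]

lemma key (n : ℕ) (u : Fin (n + 2) → UT2 S) (j : Fin (n + 2)) (hj : j ≠ Fin.last (n + 1)) :
    (ee (u j) * ww (u (Fin.last (n + 1))) - ee (u (Fin.last (n + 1))) * ww (u j)) *
        ∏ k ∈ (univ \ {j, Fin.last (n + 1)} : Finset (Fin (n + 2))), eps (u k) -
      (ee (u (Equiv.swap 0 (Fin.last (n + 1)) j)) * ww (u 0) -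
          ee (u 0) * ww (u (Equiv.swap 0 (Fin.last (n + 1)) j))) *
        ∏ k ∈ (univ \ {Equiv.swap 0 (Fin.last (n + 1)) j, 0} : Finset (Fin (n + 2))), eps (u k) =
      (if j = 0 then 2 else 1) *
        ((ee (u 0) * ww (u (Fin.last (n + 1))) - ee (u (Fin.last (n + 1))) * ww (u 0)) *
          ∏ k ∈ (univ \ {0, Fin.last (n + 1)} : Finset (Fin (n + 2))), eps (u k)) := by
  have h0l := zero_ne_last n
  by_cases hj0 : j = 0
  · subst hj0
    rw [if_pos rfl, Equiv.swap_apply_left, Finset.pair_comm (Fin.last (n + 1)) 0]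
    ring
  · rw [if_neg hj0, Equiv.swap_apply_of_ne_of_ne hj0 hj]
    set T : Finset (Fin (n + 2)) := univ \ {0, j, Fin.last (n + 1)} with hT
    have hmem0 : (0 : Fin (n + 2)) ∉ T := by simp [hT]
    have hmemj : j ∉ T := by simp [hT]
    have hmeml : Fin.last (n + 1) ∉ T := by simp [hT]
    have h1 : (univ \ {j, Fin.last (n + 1)} : Finset (Fin (n + 2))) = insert 0 T := by
      ext k
      simp only [hT, Finset.mem_sdiff, Finset.mem_univ, Finset.mem_insert,
        Finset.mem_singleton, true_and]
      constructor
      · intro h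
        push_neg at h
        by_cases hk : k = 0
        · exact Or.inl hk
        · exact Or.inr (by push_neg; exact ⟨hk, h.1, h.2⟩)
      · rintro (rfl | h)
        · push_neg; exact ⟨Ne.symm hj0, h0l⟩
        · push_neg at h ⊢; exact ⟨h.2.1, h.2.2⟩
    have h2 : (univ \ {j, 0} : Finset (Fin (n + 2))) = insert (Fin.last (n + 1)) T := by
      ext k
      simp only [hT, Finset.mem_sdiff, Finset.mem_univ, Finset.mem_insert,
        Finset.mem_singleton, true_and]
      constructor
      · intro h
        push_neg at h
        by_cases hk : k = Fin.last (n + 1)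
        · exact Or.inl hk
        · exact Or.inr (by push_neg; exact ⟨h.2, h.1, hk⟩)
      · rintro (rfl | h)
        · push_neg; exact ⟨Ne.symm hj, Ne.symm h0l⟩
        · push_neg at h ⊢; exact ⟨h.2.1, h.1⟩
    have h3 : (univ \ {0, Fin.last (n + 1)} : Finset (Fin (n + 2))) = insert j T := by
      ext k
      simp only [hT, Finset.mem_sdiff, Finset.mem_univ, Finset.mem_insert,
        Finset.mem_singleton, true_and]
      constructor
      · intro h
        push_neg at h
        by_cases hk : k = j
        · exact Or.inl hk
        · exact Or.inr (by push_neg; exact ⟨h.1, hk, h.2⟩)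
      · rintro (rfl | h)
        · push_neg; exact ⟨hj0, hj⟩
        · push_neg at h ⊢; exact ⟨h.1, h.2.2⟩
    rw [h1, h2, h3, Finset.prod_insert hmem0, Finset.prod_insert hmeml,
      Finset.prod_insert hmemj, eps_eq (u 0), eps_eq (u (Fin.last (n + 1))), eps_eq (u j)]
    ring

lemma card_fix_last (n : ℕ) :
    (univ.filter fun π : Equiv.Perm (Fin (n + 2)) =>
      π (Fin.last (n + 1)) = Fin.last (n + 1)).card = (n + 1).factorial := by
  have h1 : (univ.filter fun π : Equiv.Perm (Fin (n + 2)) =>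
      π (Fin.last (n + 1)) = Fin.last (n + 1)) =
      univ.filter fun π : Equiv.Perm (Fin (n + 2)) =>
        ∀ a, ¬ a ≠ Fin.last (n + 1) → π a = a := by
    refine Finset.filter_congr fun π _ => ?_
    constructor
    · intro h a ha
      rw [not_not] at ha
      subst ha; exact h
    · intro h
      exact h _ (not_not_intro rfl)
  rw [h1, ← Fintype.card_subtype]
  rw [← Fintype.card_congr (Equiv.Perm.subtypeEquivSubtypePerm
    (fun a : Fin (n + 2) => a ≠ Fin.last (n + 1)))]
  rw [Fintype.card_perm]
  congr 1
  rw [Fintype.card_subtype_compl, Fintype.card_subtype_eq, Fintype.card_fin]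
  omega

lemma card_fix_last_zero (n : ℕ) :
    (univ.filter fun π : Equiv.Perm (Fin (n + 2)) =>
      (π (Fin.last (n + 1)) = Fin.last (n + 1) ∧ π 0 = 0)).card = n.factorial := by
  have h1 : (univ.filter fun π : Equiv.Perm (Fin (n + 2)) =>
      (π (Fin.last (n + 1)) = Fin.last (n + 1) ∧ π 0 = 0)) =
      univ.filter fun π : Equiv.Perm (Fin (n + 2)) =>
        ∀ a, ¬ (a ≠ Fin.last (n + 1) ∧ a ≠ 0) → π a = a := by
    refine Finset.filter_congr fun π _ => ?_
    constructor
    · intro h a ha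
      rcases not_and_or.mp ha with ha | ha <;> rw [not_not] at ha <;> subst ha
      · exact h.1
      · exact h.2
    · intro h
      exact ⟨h _ (by simp), h _ (by simp)⟩
  rw [h1, ← Fintype.card_subtype]
  rw [← Fintype.card_congr (Equiv.Perm.subtypeEquivSubtypePerm
    (fun a : Fin (n + 2) => a ≠ Fin.last (n + 1) ∧ a ≠ 0))]
  rw [Fintype.card_perm]
  congr 1
  have h2 : Fintype.card {a : Fin (n + 2) // a ≠ Fin.last (n + 1) ∧ a ≠ 0} =
      Fintype.card {a : Fin (n + 2) // ¬ (a = Fin.last (n + 1) ∨ a = 0)} := by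
    apply Fintype.card_congr
    refine Equiv.subtypeEquivRight fun a => ?_
    push_neg; rfl
  rw [h2, Fintype.card_subtype_compl, Fintype.card_fin]
  have h3 : Fintype.card {a : Fin (n + 2) // a = Fin.last (n + 1) ∨ a = 0} = 2 := by
    rw [Fintype.card_subtype]
    have : (univ.filter fun a : Fin (n + 2) => a = Fin.last (n + 1) ∨ a = 0) =
        {Fin.last (n + 1), 0} := by
      ext a; simp [Finset.mem_insert]
    rw [this, Finset.card_insert_of_notMem (by simp [(zero_ne_last n).symm]),
      Finset.card_singleton]
  rw [h3]
  omega

lemma rename_one (N : ℕ) (x : FA) : rename (1 : Equiv.Perm (Fin N)) x = x := by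
  have : rename (1 : Equiv.Perm (Fin N)) = AlgHom.id ℤ FA := by
    apply FreeAlgebra.hom_ext
    funext i
    show rename (1 : Equiv.Perm (Fin N)) (X i) = FreeAlgebra.ι ℤ i
    rw [rename_X]
    show FreeAlgebra.ι ℤ (phat 1 i) = FreeAlgebra.ι ℤ i
    congr 1
    unfold phat
    split <;> rfl
  rw [this]; rfl

end Stmt14Aux

namespace Stmt14Aux

variable {S : Type} [CommRing S]

set_option synthInstance.maxHeartbeats 400000 in
lemma entry_helper {ι : Type*} (s : Finset ι) (f g : ι → UT2 S) (c : ℤ) (h : UT2 S)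
    (i j : Fin 2) :
    mat ((∑ π ∈ s, (f π - g π)) - c • h) i j =
      (∑ π ∈ s, (mat (f π) i j - mat (g π) i j)) - c • mat h i j := by
  show ((UT2 S).subtype ((∑ π ∈ s, (f π - g π)) - c • h)) i j = _
  rw [map_sub, map_sum, map_zsmul]
  simp only [map_sub]
  rw [Matrix.sub_apply, Matrix.sum_apply, Matrix.smul_apply]
  simp only [Matrix.sub_apply]
  rfl

end Stmt14Aux


open Finset in
theorem stmt_14 (S : Type) [CommRing S] (n : ℕ) :
    -- `N = n + 2` plays the role of the `n ≥ 2` of the statement; variables are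
    -- 0-indexed, so `f = [x_1, x_n, x_2, …, x_{n-1}]` is
    -- `commList (X 0) (X (n+1) :: [X 1, …, X n])` and `τ = (1 n)` is `swap 0 (N-1)`.
    (∑ π ∈ univ.filter
        (fun π : Equiv.Perm (Fin (n + 2)) => π (Fin.last (n + 1)) = Fin.last (n + 1)),
        (rename π (commList (X 0) (X (n + 1) :: (List.range n).map fun i => X (i + 1))) -
          rename (Equiv.swap 0 (Fin.last (n + 1)) * π)
            (commList (X 0) (X (n + 1) :: (List.range n).map fun i => X (i + 1))))) -
      (((n : ℤ) + 2) * (n.factorial : ℤ)) •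
        commList (X 0) (X (n + 1) :: (List.range n).map fun i => X (i + 1)) ∈
      Pn (n + 2) ⊓ IdA (UT2 S) := by
  classical
  have hrw : commList (X 0) (X (n + 1) :: (List.range n).map fun i => X (i + 1)) =
      Stmt14Aux.fpoly n := rfl
  rw [hrw, AddSubgroup.mem_inf]
  constructor
  · refine sub_mem (AddSubgroup.sum_mem _ fun π _ => sub_mem ?_ ?_)
      (AddSubgroup.zsmul_mem _ ?_ _)
    · exact Stmt14Aux.rename_fpoly_mem_Pn n π
    · exact Stmt14Aux.rename_fpoly_mem_Pn n _
    · exact Stmt14Aux.fpoly_mem_Pn n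
  · intro v
    simp only [map_sub, map_sum, map_zsmul]
    rw [show (FreeAlgebra.lift ℤ v) (Stmt14Aux.fpoly n) =
      (FreeAlgebra.lift ℤ v) (rename (1 : Equiv.Perm (Fin (n + 2))) (Stmt14Aux.fpoly n))
      from by rw [Stmt14Aux.rename_one]]
    refine Subtype.ext (Matrix.ext fun i j => ?_)
    show Stmt14Aux.mat _ i j = (0 : Matrix (Fin 2) (Fin 2) S) i j
    rw [Matrix.zero_apply, Stmt14Aux.entry_helper]
    fin_cases i <;> fin_cases j <;> simp only [Fin.mk_zero, Fin.mk_one]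
    · -- (0,0)
      rw [Finset.sum_eq_zero fun π _ => by
          rw [(Stmt14Aux.eval_term n v π).1.1, (Stmt14Aux.eval_term n v _).1.1, sub_zero],
        (Stmt14Aux.eval_term n v 1).1.1, smul_zero, sub_zero]
    · -- (0,1)
      have hww : ∀ x : UT2 S, Stmt14Aux.mat x 0 1 = Stmt14Aux.ww x := fun _ => rfl
      set c1 : S :=
        (Stmt14Aux.ee (v ((0 : Fin (n + 2)) : ℕ)) *
            Stmt14Aux.ww (v ((Fin.last (n + 1) : Fin (n + 2)) : ℕ)) -
          Stmt14Aux.ee (v ((Fin.last (n + 1) : Fin (n + 2)) : ℕ)) *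
            Stmt14Aux.ww (v ((0 : Fin (n + 2)) : ℕ))) *
          ∏ k ∈ (univ \ {(0 : Fin (n + 2)), Fin.last (n + 1)} : Finset (Fin (n + 2))),
            Stmt14Aux.eps (v (k : ℕ)) with hc1
      have ht1 : Stmt14Aux.mat ((FreeAlgebra.lift ℤ v)
          (rename (1 : Equiv.Perm (Fin (n + 2))) (Stmt14Aux.fpoly n))) 0 1 = c1 := by
        rw [hww, (Stmt14Aux.eval_term n v 1).2]
        simp only [Equiv.Perm.one_apply, hc1]
      have hval : ∀ π ∈ univ.filter
          (fun π : Equiv.Perm (Fin (n + 2)) => π (Fin.last (n + 1)) = Fin.last (n + 1)),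
          Stmt14Aux.mat ((FreeAlgebra.lift ℤ v) (rename π (Stmt14Aux.fpoly n))) 0 1 -
            Stmt14Aux.mat ((FreeAlgebra.lift ℤ v)
              (rename (Equiv.swap 0 (Fin.last (n + 1)) * π) (Stmt14Aux.fpoly n))) 0 1 =
            (if π 0 = 0 then (2 : S) else 1) * c1 := by
        intro π hπ
        have hπl : π (Fin.last (n + 1)) = Fin.last (n + 1) := (Finset.mem_filter.mp hπ).2
        have hne : π 0 ≠ Fin.last (n + 1) := fun h =>
          Stmt14Aux.zero_ne_last n (π.injective (h.trans hπl.symm))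
        have e1 := (Stmt14Aux.eval_term n v π).2
        rw [hπl] at e1
        have e2 := (Stmt14Aux.eval_term n v (Equiv.swap 0 (Fin.last (n + 1)) * π)).2
        simp only [Equiv.Perm.mul_apply] at e2
        rw [hπl, Equiv.swap_apply_right] at e2
        rw [hww, hww, e1, e2]
        simpa [hc1] using Stmt14Aux.key n (fun k => v (k : ℕ)) (π 0) hne
      rw [Finset.sum_congr rfl hval, ← Finset.sum_mul, Finset.sum_ite, Finset.sum_const,
        Finset.sum_const, ht1]
      have ha : (Finset.filter (fun π => π 0 = 0) (univ.filter
          (fun π : Equiv.Perm (Fin (n + 2)) =>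
            π (Fin.last (n + 1)) = Fin.last (n + 1)))).card = n.factorial := by
        rw [Finset.filter_filter]
        exact Stmt14Aux.card_fix_last_zero n
      have hab : (Finset.filter (fun π => π 0 = 0) (univ.filter
          (fun π : Equiv.Perm (Fin (n + 2)) =>
            π (Fin.last (n + 1)) = Fin.last (n + 1)))).card +
          (Finset.filter (fun π => ¬ π 0 = 0) (univ.filter
          (fun π : Equiv.Perm (Fin (n + 2)) =>
            π (Fin.last (n + 1)) = Fin.last (n + 1)))).card = (n + 1).factorial := by
        rw [Finset.card_filter_add_card_filter_not]
        exact Stmt14Aux.card_fix_last n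
      rw [ha] at hab ⊢
      rw [nsmul_eq_mul, nsmul_eq_mul, zsmul_eq_mul]
      have E2 : (n.factorial : S) + ((Finset.filter (fun π => ¬ π 0 = 0) (univ.filter
          (fun π : Equiv.Perm (Fin (n + 2)) =>
            π (Fin.last (n + 1)) = Fin.last (n + 1)))).card : S) =
          ((n : S) + 1) * (n.factorial : S) := by
        have := congrArg (fun t : ℕ => (t : S)) hab
        push_cast [Nat.factorial_succ] at this
        linear_combination this
      push_cast
      linear_combination c1 * E2
    · -- (1,0)
      rw [Finset.sum_eq_zero fun π _ => by
          rw [Stmt14Aux.mat10, Stmt14Aux.mat10, sub_zero],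
        Stmt14Aux.mat10, smul_zero, sub_zero]
    · -- (1,1)
      rw [Finset.sum_eq_zero fun π _ => by
          rw [(Stmt14Aux.eval_term n v π).1.2, (Stmt14Aux.eval_term n v _).1.2, sub_zero],
        (Stmt14Aux.eval_term n v 1).1.2, smul_zero, sub_zero]
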